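/- For n ≥ 3 and 1 ≤ p ≤ n−1, the maximum value of a ≥ 0 such that the matrix M(n,p,a) is positive semidefinite equals a*(n,p) = (1/2)·√((1 + 1/p)(1 + 1/(n−p))). -/

import Mathlib

open Finset Matrix

/-- `M(n,p,a)`: the ½-mask of order `n` with the pair at (1-based) positions
`(p,p+1),(p+1,p)` replaced by `a`. -/
noncomputable def Mmask1 (n p : ℕ) (a : ℝ) : Matrix (Fin n) (Fin n) ℝ :=
  Matrix.of fun i j =>
    if (i : ℕ) = j then 1
    else if (i : ℕ) + 1 = j ∨ (j : ℕ) + 1 = i then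
      (if min (i : ℕ) j + 1 = p then a else 1/2)
    else 0


-- step inequality
lemma step_ineq (q : ℝ) (hq : 1 ≤ q) (u v : ℝ) :
    (q+2)/(2*(q+1)) * v^2 ≤ (q+1)/(2*q)*u^2 + u*v + v^2 := by
  have hq0 : (0:ℝ) < q := by linarith
  have hq1 : (0:ℝ) < q+1 := by linarith
  have key : (q+1)/(2*q)*u^2 + u*v + v^2 - (q+2)/(2*(q+1)) * v^2
      = ((q+1)*u + q*v)^2 / (2*q*(q+1)) := by
    field_simp
    ring
  nlinarith [div_nonneg (sq_nonneg ((q+1)*u + q*v)) (by positivity : (0:ℝ) ≤ 2*q*(q+1))]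

-- SOS lower bound
lemma quad_lower (m : ℕ) (hm : 1 ≤ m) (y : ℕ → ℝ) :
    ((m:ℝ)+1)/(2*m) * (y (m-1))^2 ≤
      (∑ i ∈ range m, (y i)^2) + ∑ i ∈ range (m-1), y i * y (i+1) := by
  induction m with
  | zero => omega
  | succ k ih =>
    rcases Nat.eq_or_lt_of_le hm with h | h
    · simp [← h]
    · have hk : 1 ≤ k := by omega
      have ihk := ih hk
      rw [show k + 1 - 1 = k from rfl, Finset.sum_range_succ,
        show (∑ i ∈ range k, y i * y (i+1)) = ∑ i ∈ range ((k-1)+1), y i * y (i+1) by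
          rw [Nat.sub_add_cancel hk],
        Finset.sum_range_succ, show k - 1 + 1 = k by omega]
      have hs := step_ineq (k:ℝ) (by exact_mod_cast hk) (y (k-1)) (y k)
      push_cast
      calc ((k:ℝ)+1+1)/(2*((k:ℝ)+1)) * y k ^ 2
          ≤ ((k:ℝ)+1)/(2*k)*(y (k-1))^2 + y (k-1) * y k + (y k)^2 := by
            convert hs using 2 <;> ring
        _ ≤ ((∑ i ∈ range k, (y i)^2) + ∑ i ∈ range (k-1), y i * y (i+1)) + y (k-1)*y k + y k^2 := by
            linarith
        _ = ((∑ i ∈ range k, (y i)^2) + y k^2) + ((∑ i ∈ range (k-1), y i * y (i+1)) + y (k-1)*y k) := by ring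

lemma quad_form (n p : ℕ) (hn : 1 ≤ n) (a : ℝ) (x : Fin n → ℝ) (y : ℕ → ℝ)
    (hy : ∀ i : Fin n, y (i:ℕ) = x i) :
    dotProduct (star x) (Mmask1 n p a *ᵥ x) =
      (∑ i ∈ range n, (y i)^2)
        + 2 * ∑ i ∈ range (n-1), (if i + 1 = p then a else 1/2) * (y i * y (i+1)) := by
  have hdp : dotProduct (star x) (Mmask1 n p a *ᵥ x)
      = ∑ i ∈ range n, ∑ j ∈ range n,
          y i * (if i = j then (1:ℝ)
            else if i + 1 = j ∨ j + 1 = i then (if min i j + 1 = p then a else 1/2)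
            else 0) * y j := by
    rw [dotProduct, ← Fin.sum_univ_eq_sum_range]
    refine Finset.sum_congr rfl fun i _ => ?_
    rw [Matrix.mulVec, dotProduct, ← Fin.sum_univ_eq_sum_range]
    rw [Finset.mul_sum]
    refine Finset.sum_congr rfl fun j _ => ?_
    simp only [Pi.star_apply, star_trivial, Mmask1, Matrix.of_apply, hy]
    ring
  rw [hdp]
  have key : ∀ i ∈ range n, ∀ j ∈ range n,
      y i * (if i = j then (1:ℝ)
            else if i + 1 = j ∨ j + 1 = i then (if min i j + 1 = p then a else 1/2)
            else 0) * y j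
      = (if j = i then (y i)^2 else 0)
        + (if j = i + 1 then (if i + 1 = p then a else 1/2) * (y i * y j) else 0)
        + (if i = j + 1 then (if j + 1 = p then a else 1/2) * (y j * y i) else 0) := by
    intro i _ j _
    rcases Nat.lt_trichotomy i j with hij | hij | hij
    · rw [min_eq_left hij.le]
      split_ifs <;> first | ring1 | (exfalso; omega)
    · subst hij; rw [min_self]
      split_ifs <;> first | ring1 | (exfalso; omega)
    · rw [min_eq_right hij.le]
      split_ifs <;> first | ring1 | (exfalso; omega)
  rw [Finset.sum_congr rfl (fun i hi => Finset.sum_congr rfl (fun j hj => key i hi j hj))]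
  simp only [Finset.sum_add_distrib]
  have e1 : ∑ i ∈ range n, ∑ j ∈ range n, (if j = i then (y i)^2 else 0)
      = ∑ i ∈ range n, (y i)^2 := by
    refine Finset.sum_congr rfl fun i hi => ?_
    rw [Finset.sum_ite_eq' (range n) i (fun _ => (y i)^2), if_pos hi]
  have e2 : ∑ i ∈ range n, ∑ j ∈ range n,
        (if j = i + 1 then (if i + 1 = p then a else 1/2) * (y i * y j) else 0)
      = ∑ i ∈ range (n-1), (if i + 1 = p then a else 1/2) * (y i * y (i+1)) := by
    have h1 : ∀ i ∈ range n, (∑ j ∈ range n,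
        (if j = i + 1 then (if i + 1 = p then a else 1/2) * (y i * y j) else 0))
        = if i + 1 ∈ range n then (if i + 1 = p then a else 1/2) * (y i * y (i+1)) else 0 := by
      intro i _
      exact Finset.sum_ite_eq' (range n) (i+1) (fun j => (if i + 1 = p then a else 1/2) * (y i * y j))
    rw [Finset.sum_congr rfl h1]
    rw [show range n = range ((n-1)+1) from by rw [Nat.sub_add_cancel hn]]
    rw [Finset.sum_range_succ]
    rw [if_neg (by simp), add_zero]
    refine Finset.sum_congr rfl fun i hi => ?_
    rw [if_pos (by simp at hi ⊢; omega)]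
  have e3 : ∑ i ∈ range n, ∑ j ∈ range n,
        (if i = j + 1 then (if j + 1 = p then a else 1/2) * (y j * y i) else 0)
      = ∑ i ∈ range (n-1), (if i + 1 = p then a else 1/2) * (y i * y (i+1)) := by
    rw [Finset.sum_comm]
    have h1 : ∀ j ∈ range n, (∑ i ∈ range n,
        (if i = j + 1 then (if j + 1 = p then a else 1/2) * (y j * y i) else 0))
        = if j + 1 ∈ range n then (if j + 1 = p then a else 1/2) * (y j * y (j+1)) else 0 := by
      intro j _
      exact Finset.sum_ite_eq' (range n) (j+1) (fun i => (if j + 1 = p then a else 1/2) * (y j * y i))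
    rw [Finset.sum_congr rfl h1]
    rw [show range n = range ((n-1)+1) from by rw [Nat.sub_add_cancel hn]]
    rw [Finset.sum_range_succ]
    rw [if_neg (by simp), add_zero]
    refine Finset.sum_congr rfl fun i hi => ?_
    rw [if_pos (by simp at hi ⊢; omega)]
  rw [e1, e2, e3]; ring

lemma sq_neg_one_pow (k : ℕ) : ((-1:ℝ)^k)^2 = 1 := by
  rw [← pow_mul, mul_comm, pow_mul, neg_one_sq, one_pow]

lemma neg_one_pow_succ_mul (k : ℕ) : (-1:ℝ)^(k+1) * (-1)^k = -1 := by
  rw [pow_succ]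
  have := sq_neg_one_pow k
  nlinarith [sq_neg_one_pow k]

lemma FG (m : ℕ) (hm : 1 ≤ m) :
    (∑ i ∈ range m, ((i:ℝ)+1)^2) - (∑ i ∈ range (m-1), ((i:ℝ)+1)*((i:ℝ)+2))
      = (m:ℝ)*((m:ℝ)+1)/2 := by
  induction m with
  | zero => omega
  | succ k ih =>
    rcases Nat.eq_or_lt_of_le hm with h | h
    · simp [← h]
    · have hk : 1 ≤ k := by omega
      have ihk := ih hk
      rw [Finset.sum_range_succ, show k + 1 - 1 = k from rfl,
        show (∑ i ∈ range k, ((i:ℝ)+1)*((i:ℝ)+2))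
            = ∑ i ∈ range ((k-1)+1), ((i:ℝ)+1)*((i:ℝ)+2) by rw [Nat.sub_add_cancel hk],
        Finset.sum_range_succ]
      have hc : ((k-1 : ℕ):ℝ) = (k:ℝ) - 1 := by
        rw [Nat.cast_sub hk]; norm_num
      rw [hc]
      push_cast
      nlinarith [ihk]

lemma Mmask1_isHermitian (n p : ℕ) (a : ℝ) : (Mmask1 n p a).IsHermitian := by
  ext i j
  simp only [Matrix.conjTranspose_apply, Mmask1, Matrix.of_apply, star_trivial]
  rw [min_comm (j:ℕ) (i:ℕ)]
  split_ifs <;> first | rfl | (exfalso; omega)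

lemma mem_part (n p : ℕ) (hn : 3 ≤ n) (hp : 1 ≤ p) (hpn : p ≤ n - 1) :
    (Mmask1 n p (Real.sqrt (((p:ℝ)+1)/(2*p)) *
      Real.sqrt ((((n-p:ℕ):ℝ)+1)/(2*((n-p:ℕ):ℝ))))).PosSemidef := by
  obtain ⟨q, hq_def⟩ : ∃ q, q = n - p := ⟨n - p, rfl⟩
  have hq : 1 ≤ q := by omega
  rw [← hq_def]
  set cp : ℝ := ((p:ℝ)+1)/(2*p) with hcp_def
  set cq : ℝ := ((q:ℝ)+1)/(2*q) with hcq_def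
  have hp0 : (0:ℝ) < p := by exact_mod_cast hp
  have hq0 : (0:ℝ) < q := by exact_mod_cast hq
  have hcp : 0 < cp := by positivity
  have hcq : 0 < cq := by positivity
  set astar : ℝ := Real.sqrt cp * Real.sqrt cq with hastar_def
  refine Matrix.PosSemidef.of_dotProduct_mulVec_nonneg (Mmask1_isHermitian n p astar) fun x => ?_
  set y : ℕ → ℝ := fun i => if h : i < n then x ⟨i, h⟩ else 0 with hy_def
  have hy : ∀ i : Fin n, y (i:ℕ) = x i := fun i => dif_pos i.isLt
  rw [quad_form n p (by omega) astar x y hy]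
  -- split the square sum
  have hS1 : ∑ i ∈ range n, (y i)^2
      = (∑ i ∈ range p, (y i)^2) + ∑ j ∈ range q, (y (p+j))^2 := by
    rw [← Finset.sum_range_add_sum_Ico (fun i => (y i)^2) (show p ≤ n by omega),
      Finset.sum_Ico_eq_sum_range, show n - p = q from hq_def.symm]
  -- split the cross sum
  have hS2 : ∑ i ∈ range (n-1), (if i + 1 = p then astar else 1/2) * (y i * y (i+1))
      = (∑ i ∈ range (p-1), (1/2) * (y i * y (i+1)))
        + astar * (y (p-1) * y p)
        + ∑ j ∈ range (q-1), (1/2) * (y (p+j) * y (p+j+1)) := by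
    rw [← Finset.sum_range_add_sum_Ico
        (fun i => (if i + 1 = p then astar else 1/2) * (y i * y (i+1)))
        (show p ≤ n - 1 by omega),
      Finset.sum_Ico_eq_sum_range,
      show range p = range ((p-1)+1) from by rw [Nat.sub_add_cancel hp],
      Finset.sum_range_succ]
    have e1 : ∀ i ∈ range (p-1),
        (if i + 1 = p then astar else 1/2) * (y i * y (i+1))
          = (1/2) * (y i * y (i+1)) := by
      intro i hi
      rw [if_neg (by simp at hi; omega)]
    have e2 : (if (p-1) + 1 = p then astar else 1/2) * (y (p-1) * y ((p-1)+1))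
        = astar * (y (p-1) * y p) := by
      rw [if_pos (by omega), show (p-1)+1 = p by omega]
    have e3 : ∀ j ∈ range (n - 1 - p),
        (if (p + j) + 1 = p then astar else 1/2) * (y (p+j) * y ((p+j)+1))
          = (1/2) * (y (p+j) * y (p+j+1)) := by
      intro j hj
      rw [if_neg (by omega)]
    rw [Finset.sum_congr rfl e1, e2, Finset.sum_congr rfl e3,
      show n - 1 - p = q - 1 by omega]
  rw [hS1, hS2]
  -- left block lower bound
  have hL := quad_lower p hp y
  -- right block lower bound
  set z : ℕ → ℝ := fun j => y (n-1-j) with hz_def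
  have hR := quad_lower q hq z
  have hz1 : z (q-1) = y p := by
    show y (n-1-(q-1)) = y p
    congr 1
    omega
  have hz2 : ∑ j ∈ range q, (z j)^2 = ∑ j ∈ range q, (y (p+j))^2 := by
    rw [← Finset.sum_range_reflect (fun j => (y (p+j))^2) q]
    refine Finset.sum_congr rfl fun j hj => ?_
    have hj' := Finset.mem_range.mp hj
    show (y (n-1-j))^2 = (y (p+(q-1-j)))^2
    have : n-1-j = p + (q-1-j) := by omega
    rw [this]
  have hz3 : ∑ j ∈ range (q-1), z j * z (j+1)
      = ∑ j ∈ range (q-1), y (p+j) * y (p+j+1) := by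
    rw [← Finset.sum_range_reflect (fun j => y (p+j) * y (p+j+1)) (q-1)]
    refine Finset.sum_congr rfl fun j hj => ?_
    have hj' := Finset.mem_range.mp hj
    show y (n-1-j) * y (n-1-(j+1)) = y (p+((q-1)-1-j)) * y (p+((q-1)-1-j)+1)
    have e1 : n-1-j = p + ((q-1)-1-j) + 1 := by omega
    have e2 : n-1-(j+1) = p + ((q-1)-1-j) := by omega
    rw [e1, e2]
    ring
  rw [hz1, hz2, hz3] at hR
  -- combine
  have h1 : Real.sqrt cp ^ 2 = cp := Real.sq_sqrt hcp.le
  have h2 : Real.sqrt cq ^ 2 = cq := Real.sq_sqrt hcq.le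
  have hexp : (Real.sqrt cp * y (p-1) + Real.sqrt cq * y p)^2
      = cp * (y (p-1))^2 + cq * (y p)^2 + 2*astar*(y (p-1) * y p) := by
    rw [hastar_def]
    linear_combination (y (p-1))^2 * h1 + (y p)^2 * h2
  have hsq := sq_nonneg (Real.sqrt cp * y (p-1) + Real.sqrt cq * y p)
  have hCp : ∑ i ∈ range (p-1), (1/2) * (y i * y (i+1))
      = (1/2) * ∑ i ∈ range (p-1), y i * y (i+1) := by rw [Finset.mul_sum]
  have hCq : ∑ j ∈ range (q-1), (1/2) * (y (p+j) * y (p+j+1))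
      = (1/2) * ∑ j ∈ range (q-1), y (p+j) * y (p+j+1) := by rw [Finset.mul_sum]
  rw [hCp, hCq]
  linarith [hL, hR, hsq, hexp]

lemma sq_helper (t A P : ℝ) (h : t^2 = 1) : (t * A / P)^2 = (A/P)^2 := by
  linear_combination (A/P)^2 * h

lemma sq_helper2 (t s A P : ℝ) (h : t^2 = 1) : (t * s * A / P)^2 = s^2 * (A/P)^2 := by
  linear_combination (s*A/P)^2 * h

lemma ub_part (n p : ℕ) (hn : 3 ≤ n) (hp : 1 ≤ p) (hpn : p ≤ n - 1) (b : ℝ)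
    (hb : 0 ≤ b) (hPSD : (Mmask1 n p b).PosSemidef) :
    b ≤ Real.sqrt (((p:ℝ)+1)/(2*p)) *
      Real.sqrt ((((n-p:ℕ):ℝ)+1)/(2*((n-p:ℕ):ℝ))) := by
  obtain ⟨q, hq_def⟩ : ∃ q, q = n - p := ⟨n - p, rfl⟩
  have hq : 1 ≤ q := by omega
  rw [← hq_def]
  set cp : ℝ := ((p:ℝ)+1)/(2*p) with hcp_def
  set cq : ℝ := ((q:ℝ)+1)/(2*q) with hcq_def
  have hp0 : (0:ℝ) < p := by exact_mod_cast hp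
  have hq0 : (0:ℝ) < q := by exact_mod_cast hq
  have hcp : 0 < cp := by positivity
  have hcq : 0 < cq := by positivity
  have hscp : 0 < Real.sqrt cp := Real.sqrt_pos.2 hcp
  have hscq : 0 < Real.sqrt cq := Real.sqrt_pos.2 hcq
  set s : ℝ := Real.sqrt cp / Real.sqrt cq with hs_def
  have hs : 0 < s := div_pos hscp hscq
  set w : ℕ → ℝ := fun i =>
    if i < p then (-1:ℝ)^(p-1-i) * (((i:ℕ):ℝ)+1)/(p:ℝ)
    else if i < n then (-1:ℝ)^(i-p+1) * s * (((n-i : ℕ):ℝ))/(q:ℝ)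
    else 0 with hw_def
  have hw1 : ∀ i, i < p → w i = (-1:ℝ)^(p-1-i) * (((i:ℕ):ℝ)+1)/(p:ℝ) := by
    intro i hi
    simp only [hw_def]
    rw [if_pos hi]
  have hw2 : ∀ j, j < q → w (p+j) = (-1:ℝ)^(j+1) * s * (((q-j : ℕ):ℝ))/(q:ℝ) := by
    intro j hj
    simp only [hw_def]
    rw [if_neg (by omega), if_pos (by omega), show p + j - p + 1 = j + 1 by omega,
      show n - (p+j) = q - j by omega]
  have hx := hPSD.dotProduct_mulVec_nonneg (fun i : Fin n => w (i:ℕ))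
  rw [quad_form n p (by omega) b _ w (fun i => rfl)] at hx
  have hS1 : ∑ i ∈ range n, (w i)^2
      = (∑ i ∈ range p, (w i)^2) + ∑ j ∈ range q, (w (p+j))^2 := by
    rw [← Finset.sum_range_add_sum_Ico (fun i => (w i)^2) (show p ≤ n by omega),
      Finset.sum_Ico_eq_sum_range, show n - p = q from hq_def.symm]
  have hS2 : ∑ i ∈ range (n-1), (if i + 1 = p then b else 1/2) * (w i * w (i+1))
      = (∑ i ∈ range (p-1), (1/2) * (w i * w (i+1)))
        + b * (w (p-1) * w p)
        + ∑ j ∈ range (q-1), (1/2) * (w (p+j) * w (p+j+1)) := by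
    rw [← Finset.sum_range_add_sum_Ico
        (fun i => (if i + 1 = p then b else 1/2) * (w i * w (i+1)))
        (show p ≤ n - 1 by omega),
      Finset.sum_Ico_eq_sum_range,
      show range p = range ((p-1)+1) from by rw [Nat.sub_add_cancel hp],
      Finset.sum_range_succ]
    have e1 : ∀ i ∈ range (p-1),
        (if i + 1 = p then b else 1/2) * (w i * w (i+1))
          = (1/2) * (w i * w (i+1)) := by
      intro i hi
      rw [if_neg (by simp at hi; omega)]
    have e2 : (if (p-1) + 1 = p then b else 1/2) * (w (p-1) * w ((p-1)+1))
        = b * (w (p-1) * w p) := by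
      rw [if_pos (by omega), show (p-1)+1 = p by omega]
    have e3 : ∀ j ∈ range (n - 1 - p),
        (if (p + j) + 1 = p then b else 1/2) * (w (p+j) * w ((p+j)+1))
          = (1/2) * (w (p+j) * w (p+j+1)) := by
      intro j hj
      rw [if_neg (by omega)]
    rw [Finset.sum_congr rfl e1, e2, Finset.sum_congr rfl e3,
      show n - 1 - p = q - 1 by omega]
  rw [hS1, hS2] at hx
  -- evaluate the pieces
  have SA : ∑ i ∈ range p, (w i)^2
      = (∑ i ∈ range p, ((i:ℝ)+1)^2) / (p:ℝ)^2 := by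
    rw [Finset.sum_div]
    refine Finset.sum_congr rfl fun i hi => ?_
    have hi' := Finset.mem_range.mp hi
    rw [hw1 i hi', sq_helper _ _ _ (sq_neg_one_pow (p-1-i)), div_pow]
  have SB : ∑ j ∈ range q, (w (p+j))^2
      = s^2 * ((∑ i ∈ range q, ((i:ℝ)+1)^2) / (q:ℝ)^2) := by
    have e : ∀ j ∈ range q, (w (p+j))^2 = s^2 * ((((q-j:ℕ):ℝ))^2/(q:ℝ)^2) := by
      intro j hj
      have hj' := Finset.mem_range.mp hj
      rw [hw2 j hj', sq_helper2 _ _ _ _ (sq_neg_one_pow (j+1))]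
      ring
    rw [Finset.sum_congr rfl e, ← Finset.mul_sum]
    congr 1
    rw [Finset.sum_div, ← Finset.sum_range_reflect (fun i => ((i:ℝ)+1)^2/(q:ℝ)^2) q]
    refine Finset.sum_congr rfl fun j hj => ?_
    have hj' := Finset.mem_range.mp hj
    rw [show q - j = (q-1-j) + 1 by omega]
    push_cast
    ring
  have SC : ∑ i ∈ range (p-1), (1/2) * (w i * w (i+1))
      = -((1/2) * ((∑ i ∈ range (p-1), ((i:ℝ)+1)*((i:ℝ)+2)) / (p:ℝ)^2)) := by
    have e : ∀ i ∈ range (p-1), (1/2) * (w i * w (i+1))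
        = -((1/2) * ((((i:ℝ)+1)*((i:ℝ)+2)) / (p:ℝ)^2)) := by
      intro i hi
      have hi' := Finset.mem_range.mp hi
      rw [hw1 i (by omega), hw1 (i+1) (by omega), show p-1-i = (p-2-i)+1 by omega,
        show p-1-(i+1) = p-2-i by omega]
      push_cast
      linear_combination (((i:ℝ)+1)*((i:ℝ)+2)/(2*(p:ℝ)^2)) * neg_one_pow_succ_mul (p-2-i)
    rw [Finset.sum_congr rfl e, Finset.sum_neg_distrib, ← Finset.mul_sum, Finset.sum_div]
  have SD1 : w (p-1) = 1 := by
    rw [hw1 (p-1) (by omega), show p-1-(p-1) = 0 by omega,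
      show ((p-1:ℕ):ℝ) = (p:ℝ) - 1 by rw [Nat.cast_sub hp]; norm_num]
    field_simp
    ring
  have SD2 : w p = -s := by
    have h0 := hw2 0 (by omega)
    rw [Nat.add_zero, Nat.sub_zero] at h0
    rw [h0]
    field_simp
    norm_num
  have SE : ∑ j ∈ range (q-1), (1/2) * (w (p+j) * w (p+j+1))
      = -((1/2) * (s^2 * ((∑ i ∈ range (q-1), ((i:ℝ)+1)*((i:ℝ)+2)) / (q:ℝ)^2))) := by
    have e : ∀ j ∈ range (q-1), (1/2) * (w (p+j) * w (p+j+1))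
        = -((1/2) * (s^2 * ((((q-j:ℕ):ℝ)*(((q-j-1:ℕ)):ℝ)) / (q:ℝ)^2))) := by
      intro j hj
      have hj' := Finset.mem_range.mp hj
      have ha := hw2 j (by omega)
      have hb2 := hw2 (j+1) (by omega)
      rw [show p + j + 1 = p + (j+1) by omega, ha, hb2,
        show q - (j+1) = q - j - 1 by omega]
      linear_combination (s^2*(((q-j:ℕ):ℝ)*(((q-j-1:ℕ)):ℝ))/(2*(q:ℝ)^2)) * neg_one_pow_succ_mul (j+1)
    rw [Finset.sum_congr rfl e, Finset.sum_neg_distrib, ← Finset.mul_sum, ← Finset.mul_sum]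
    congr 3
    rw [Finset.sum_div, ← Finset.sum_range_reflect (fun i => ((i:ℝ)+1)*((i:ℝ)+2)/(q:ℝ)^2) (q-1)]
    refine Finset.sum_congr rfl fun j hj => ?_
    have hj' := Finset.mem_range.mp hj
    rw [show q - j - 1 = (q-1-1-j) + 1 by omega, show q - j = (q-1-1-j) + 2 by omega]
    push_cast
    ring
  rw [SA, SB, SC, SD1, SD2, SE] at hx
  have h5 : (∑ i ∈ range p, ((i:ℝ)+1)^2)/(p:ℝ)^2
      - (∑ i ∈ range (p-1), ((i:ℝ)+1)*((i:ℝ)+2))/(p:ℝ)^2 = cp := by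
    rw [div_sub_div_same, FG p hp, hcp_def]
    field_simp
  have h6 : (∑ i ∈ range q, ((i:ℝ)+1)^2)/(q:ℝ)^2
      - (∑ i ∈ range (q-1), ((i:ℝ)+1)*((i:ℝ)+2))/(q:ℝ)^2 = cq := by
    rw [div_sub_div_same, FG q hq, hcq_def]
    field_simp
  have h6' : s^2 * ((∑ i ∈ range q, ((i:ℝ)+1)^2)/(q:ℝ)^2)
      - s^2 * ((∑ i ∈ range (q-1), ((i:ℝ)+1)*((i:ℝ)+2))/(q:ℝ)^2) = s^2 * cq := by
    rw [← mul_sub, h6]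
  have hfin : 0 ≤ cp + s^2*cq - 2*(b*s) := by nlinarith [hx, h5, h6']
  have hs2 : s^2 * cq = cp := by
    rw [hs_def, div_pow, Real.sq_sqrt hcp.le, Real.sq_sqrt hcq.le,
      div_mul_cancel₀ _ (ne_of_gt hcq)]
  have hbs : b * s ≤ cp := by linarith
  have hkey : Real.sqrt cp * Real.sqrt cq * s = cp := by
    rw [hs_def]
    rw [mul_div_assoc', div_eq_iff hscq.ne']
    linear_combination Real.sqrt cq * (Real.mul_self_sqrt hcp.le)
  have := (le_div_iff₀ hs).mpr hbs
  rwa [← hkey, mul_div_cancel_right₀ _ (ne_of_gt hs)] at this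


lemma astar_eq (n p : ℕ) (hn : 3 ≤ n) (hp : 1 ≤ p) (hpn : p ≤ n - 1) :
    (1 / 2) * Real.sqrt ((1 + 1 / (p : ℝ)) * (1 + 1 / ((n : ℝ) - p)))
      = Real.sqrt (((p:ℝ)+1)/(2*p)) *
        Real.sqrt ((((n-p:ℕ):ℝ)+1)/(2*((n-p:ℕ):ℝ))) := by
  obtain ⟨q, hq_def⟩ : ∃ q, q = n - p := ⟨n - p, rfl⟩
  have hq : 1 ≤ q := by omega
  rw [← hq_def]
  have hp0 : (0:ℝ) < p := by exact_mod_cast hp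
  have hq0 : (0:ℝ) < q := by exact_mod_cast hq
  have hqr : ((q:ℕ):ℝ) = (n:ℝ) - p := by
    rw [hq_def, Nat.cast_sub (by omega)]
  set cp : ℝ := ((p:ℝ)+1)/(2*p) with hcp_def
  set cq : ℝ := ((q:ℝ)+1)/(2*q) with hcq_def
  have hcp : 0 < cp := by positivity
  have hcq : 0 < cq := by positivity
  have h1 : (1 + 1/(p:ℝ)) = 2*cp := by
    rw [hcp_def]; field_simp
  have h2 : 1 + 1/((n:ℝ)-p) = 2*cq := by
    rw [← hqr, hcq_def]; field_simp
  rw [h1, h2, show (2*cp)*(2*cq) = 4*(cp*cq) by ring,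
    Real.sqrt_mul (by norm_num : (0:ℝ) ≤ 4),
    show Real.sqrt 4 = 2 by
      rw [show (4:ℝ) = 2^2 by norm_num, Real.sqrt_sq (by norm_num : (0:ℝ) ≤ 2)],
    Real.sqrt_mul hcp.le]
  ring


/-- The maximum value of `a ≥ 0` with `M(n,p,a) ⪰ 0` is
`a*(n,p) = (1/2)√((1+1/p)(1+1/(n−p)))`. -/
theorem max_a_posSemidef_Mmask1 (n p : ℕ) (hn : 3 ≤ n) (hp : 1 ≤ p) (hpn : p ≤ n - 1) :
    IsGreatest {a : ℝ | 0 ≤ a ∧ (Mmask1 n p a).PosSemidef}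
      ((1 / 2) * Real.sqrt ((1 + 1 / (p : ℝ)) * (1 + 1 / ((n : ℝ) - p)))) := by
  rw [astar_eq n p hn hp hpn]
  constructor
  · exact ⟨by positivity, mem_part n p hn hp hpn⟩
  · rintro b ⟨hb, hPSD⟩
    exact ub_part n p hn hp hpn b hb hPSD
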